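/- For every α ∈ (0,1) and θ ∈ ℝ, the elementary quantile scoring function S^Q_{α,θ} is order sensitive for the α-quantile: for any probability measure F on ℝ, any α-quantile t of F, and x₂ ≤ x₁ ≤ t one has E_F[S^Q_{α,θ}(x₂,Y)] ≥ E_F[S^Q_{α,θ}(x₁,Y)], and for t ≤ x₁ ≤ x₂ one has E_F[S^Q_{α,θ}(x₁,Y)] ≤ E_F[S^Q_{α,θ}(x₂,Y)]. -/

import Mathlib

open MeasureTheory

/-- Elementary quantile score `S^Q_{α,θ}(x,y)`. -/
noncomputable def SQ (α θ x y : ℝ) : ℝ :=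
  ((if y < x then (1:ℝ) else 0) - α) * ((if θ < x then (1:ℝ) else 0) - (if θ < y then (1:ℝ) else 0))

lemma int_SQ (α θ x : ℝ) (F : Measure ℝ) [IsProbabilityMeasure F] :
    ∫ y, SQ α θ x y ∂F =
      if θ < x then (1 - α) * (F (Set.Iic θ)).toReal
      else α * (F (Set.Ioi θ)).toReal := by
  by_cases h : θ < x
  · have hfun : (fun y => SQ α θ x y)
        = Set.indicator (Set.Iic θ) (fun _ => (1 - α : ℝ)) := by
      funext y
      simp only [SQ, Set.indicator, Set.mem_Iic]
      by_cases hy : y ≤ θ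
      · have h1 : y < x := lt_of_le_of_lt hy h
        have h2 : ¬ θ < y := not_lt.mpr hy
        simp [h, h1, h2, hy]
      · have h2 : θ < y := lt_of_not_ge hy
        simp [h, h2, hy]
    rw [if_pos h, hfun, integral_indicator_const _ measurableSet_Iic, smul_eq_mul, mul_comm, measureReal_def]
  · have hx : x ≤ θ := not_lt.mp h
    have hfun : (fun y => SQ α θ x y)
        = Set.indicator (Set.Ioi θ) (fun _ => (α : ℝ)) := by
      funext y
      simp only [SQ, Set.indicator, Set.mem_Ioi]
      by_cases hy : θ < y
      · have h1 : ¬ y < x := not_lt.mpr (le_trans hx hy.le)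
        simp [h, h1, hy]
      · simp [h, hy]
    rw [if_neg h, hfun, integral_indicator_const _ measurableSet_Ioi, smul_eq_mul, mul_comm, measureReal_def]

/-- Order sensitivity of the elementary quantile score: for any probability measure `F`,
any α-quantile `t` of `F` (i.e. `F(t−) ≤ α ≤ F(t)`), moving the point forecast toward `t`
does not increase the expected score. -/
theorem stmt9 (α : ℝ) (hα : α ∈ Set.Ioo (0:ℝ) 1) (θ : ℝ)
    (F : Measure ℝ) [IsProbabilityMeasure F] (t : ℝ)
    (ht : (F (Set.Iio t)).toReal ≤ α ∧ α ≤ (F (Set.Iic t)).toReal) :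
    (∀ x₁ x₂ : ℝ, x₂ ≤ x₁ → x₁ ≤ t →
      ∫ y, SQ α θ x₁ y ∂F ≤ ∫ y, SQ α θ x₂ y ∂F) ∧
    (∀ x₁ x₂ : ℝ, t ≤ x₁ → x₁ ≤ x₂ →
      ∫ y, SQ α θ x₁ y ∂F ≤ ∫ y, SQ α θ x₂ y ∂F) := by
  have hsum : (F (Set.Iic θ)).toReal + (F (Set.Ioi θ)).toReal = 1 := by
    have h := measure_add_measure_compl (μ := F) (measurableSet_Iic (a := θ))
    rw [Set.compl_Iic] at h
    have h2 := congrArg ENNReal.toReal h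
    rwa [ENNReal.toReal_add (measure_ne_top _ _) (measure_ne_top _ _), measure_univ,
      ENNReal.toReal_one] at h2
  constructor
  · intro x₁ x₂ h21 h1t
    rw [int_SQ, int_SQ]
    split_ifs with h1 h2
    · exact le_refl _
    · -- θ < x₁ ≤ t, x₂ ≤ θ
      have hsub : Set.Iic θ ⊆ Set.Iio t := fun y hy =>
        lt_of_le_of_lt hy (lt_of_lt_of_le h1 h1t)
      have hle : (F (Set.Iic θ)).toReal ≤ α :=
        le_trans (ENNReal.toReal_mono (measure_ne_top _ _) (measure_mono hsub)) ht.1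
      have hd : (F (Set.Ioi θ)).toReal = 1 - (F (Set.Iic θ)).toReal := by linarith
      rw [hd]; nlinarith
    · exact absurd (lt_of_lt_of_le (lt_of_not_ge (fun hc => h1 (lt_of_lt_of_le (by assumption) h21))) h21) h1
    · exact le_refl _
  · intro x₁ x₂ ht1 h12
    rw [int_SQ, int_SQ]
    split_ifs with h1 h2
    · exact le_refl _
    · exact absurd (lt_of_lt_of_le h1 h12) h2
    · -- t ≤ x₁ ≤ θ, θ < x₂
      have hx1θ : x₁ ≤ θ := not_lt.mp h1
      have hsub : Set.Iic t ⊆ Set.Iic θ := fun y hy => le_trans hy (le_trans ht1 hx1θ)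
      have hge : α ≤ (F (Set.Iic θ)).toReal :=
        le_trans ht.2 (ENNReal.toReal_mono (measure_ne_top _ _) (measure_mono hsub))
      have hd : (F (Set.Ioi θ)).toReal = 1 - (F (Set.Iic θ)).toReal := by linarith
      rw [hd]; nlinarith
    · exact le_refl _
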